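/- Let A = Â = {1,2,3,…}, let P' be a probability distribution on A with infinite entropy H(P') = ∞ and P'(x) > 0 for all x, and let ρ(x,y) := P'(x)^{-1}·1{x ≠ y} + |x − y|. Then: (i) any pair of random variables (U,V) with values in A × Â, U ∼ P' and E[ρ(U,V)] < ∞ satisfies I(U;V) = ∞; hence R₁(P', D) = ∞ for every D ≥ 0. (ii) Consequently, for any probability distribution P on A with finite entropy H(P) < ∞ and any D ≥ 0, setting P_ε := (1−ε)P + εP' for ε ∈ (0,1), one has P_ε → P in total variation as ε ↓ 0 while R₁(P_ε, D) = ∞ for every ε ∈ (0,1) and R₁(P, D) ≤ H(P) < ∞; so the map P ↦ R₁(P,D) is discontinuous in the topology of total variation at every P where it is finite. -/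

import Mathlib

open MeasureTheory ProbabilityTheory Filter Topology Set
open scoped ENNReal NNReal

noncomputable section

open scoped Classical in
/-- Relative entropy `H(μ‖ν)`, with values in `ℝ≥0∞` and the convention that it is `∞`
unless `μ ≪ ν` and the log-likelihood ratio is integrable. -/
def relEnt {X : Type*} [MeasurableSpace X] (μ ν : Measure X) : ℝ≥0∞ :=
  if μ ≪ ν ∧ Integrable (llr μ ν) μ then ENNReal.ofReal (∫ x, llr μ ν x ∂μ) else ⊤

/-- The set `W(P,D)` of couplings with first marginal `P` and expected distortion at most `D`. -/
def Wset {A B : Type*} [MeasurableSpace A] [MeasurableSpace B]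
    (ρ : A → B → ℝ) (P : Measure A) (D : ℝ) : Set (Measure (A × B)) :=
  {W | IsProbabilityMeasure W ∧ W.fst = P ∧
    ∫⁻ p, ENNReal.ofReal (ρ p.1 p.2) ∂W ≤ ENNReal.ofReal D}

/-- `R₁(P,Q,D) := inf_{W ∈ W(P,D)} H(W ‖ P × Q)`, with `inf ∅ = ∞`. -/
def RQ {A B : Type*} [MeasurableSpace A] [MeasurableSpace B]
    (ρ : A → B → ℝ) (P : Measure A) (Q : Measure B) (D : ℝ) : ℝ≥0∞ :=
  ⨅ W ∈ Wset ρ P D, relEnt W (P.prod Q)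

/-- `R₁^Θ(P,D) := inf_θ R₁(P,Q_θ,D)`. -/
def RTh {A B Θ : Type*} [MeasurableSpace A] [MeasurableSpace B]
    (ρ : A → B → ℝ) (Q : Θ → Measure B) (P : Measure A) (D : ℝ) : ℝ≥0∞ :=
  ⨅ θ : Θ, RQ ρ P (Q θ) D

/-- The (first-order) rate-distortion function
`R₁(P,D) := inf_{W ∈ W(P,D)} H(W ‖ W^A × W^Â)`, with `inf ∅ = ∞`. -/
def Rnp {A B : Type*} [MeasurableSpace A] [MeasurableSpace B]
    (ρ : A → B → ℝ) (P : Measure A) (D : ℝ) : ℝ≥0∞ :=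
  ⨅ W ∈ Wset ρ P D, relEnt W (W.fst.prod W.snd)

/-- The empirical distribution of `(x 0, …, x (n-1))`. -/
def empMeas {A : Type*} [MeasurableSpace A] (x : ℕ → A) (n : ℕ) : Measure A :=
  (n : ℝ≥0∞)⁻¹ • ∑ k ∈ Finset.range n, Measure.dirac (x k)

/-- The shift map on sequences. -/
def shift {A : Type*} : (ℕ → A) → (ℕ → A) := fun x n => x (n + 1)

/-- `D_c^Θ(P)`: the set of distortion levels where `D ↦ R₁^Θ(P,D)` is continuous from the
left (the left limit being the infimum over `λ ∈ (0,1)` of `R₁^Θ(P,λD)`, by monotonicity),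
with the conventions that `0 ∈ D_c^Θ(P)` and that `D ∈ D_c^Θ(P)` whenever `R₁^Θ(P,D) = ∞`. -/
def DcTh {A B Θ : Type*} [MeasurableSpace A] [MeasurableSpace B]
    (ρ : A → B → ℝ) (Q : Θ → Measure B) (P : Measure A) : Set ℝ :=
  {D | 0 ≤ D ∧ (D = 0 ∨ RTh ρ Q P D = ⊤ ∨
    RTh ρ Q P D = ⨅ l ∈ Set.Ioo (0:ℝ) 1, RTh ρ Q P (l * D))}

/-- `D_c(P)` for the rate-distortion function. -/
def DcNp {A B : Type*} [MeasurableSpace A] [MeasurableSpace B]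
    (ρ : A → B → ℝ) (P : Measure A) : Set ℝ :=
  {D | 0 ≤ D ∧ (D = 0 ∨ Rnp ρ P D = ⊤ ∨
    Rnp ρ P D = ⨅ l ∈ Set.Ioo (0:ℝ) 1, Rnp ρ P (l * D))}

/-- `D_c(P,Q)` for `R₁(P,Q,·)`. -/
def DcQ {A B : Type*} [MeasurableSpace A] [MeasurableSpace B]
    (ρ : A → B → ℝ) (P : Measure A) (Q : Measure B) : Set ℝ :=
  {D | 0 ≤ D ∧ (D = 0 ∨ RQ ρ P Q D = ⊤ ∨
    RQ ρ P Q D = ⨅ l ∈ Set.Ioo (0:ℝ) 1, RQ ρ P Q (l * D))}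

/-- The union of distortion balls of radius `M` centered at points of `K`. -/
def Bset {A B : Type*} (ρ : A → B → ℝ) (K : Set A) (M : ℝ) : Set B :=
  {y | ∃ x ∈ K, ρ x y ≤ M}

/-- The Shannon entropy (in nats) of a discrete distribution on `ℕ`. -/
def discEntropy (P : Measure ℕ) : ℝ≥0∞ :=
  ∑' x : ℕ, ENNReal.ofReal (Real.negMulLog ((P {x}).toReal))


def dd (z : ℕ × ℕ) : ℕ := (z.1 - z.2) + (z.2 - z.1)

lemma real_key {a pr qr : ℝ} (ha : 0 < a) (hap : a ≤ pr) (haq : a ≤ qr) (d : ℕ) :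
    a * Real.log pr⁻¹ ≤ a * |Real.log (a / (pr * qr))| + qr * ((1/4) * (1/2)^d)
      + a * Real.log 4 + a * ((d : ℝ) * Real.log 2) := by
  have hpr : 0 < pr := lt_of_lt_of_le ha hap
  have hqr : 0 < qr := lt_of_lt_of_le ha haq
  set gr : ℝ := (1/4) * (1/2)^d with hgr
  have hgrpos : 0 < gr := by positivity
  have hlg : Real.log gr = -(Real.log 4 + (d:ℝ) * Real.log 2) := by
    rw [hgr, Real.log_mul (by norm_num) (by positivity), Real.log_pow]
    have h2 : Real.log (1/2 : ℝ) = -Real.log 2 := by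
      rw [one_div, Real.log_inv]
    have h4 : Real.log (1/4 : ℝ) = -Real.log 4 := by
      rw [one_div, Real.log_inv]
    rw [h2, h4]; push_cast; ring
  have hid : Real.log pr⁻¹ = Real.log (a / (pr * qr)) + Real.log (qr * gr / a)
      + (Real.log 4 + (d:ℝ) * Real.log 2) := by
    rw [Real.log_div (by positivity) (by positivity), Real.log_div (by positivity) (by positivity),
      Real.log_mul (by positivity) (by positivity), Real.log_mul (by positivity) (by positivity),
      Real.log_inv, hlg]
    ring
  have h2 : a * Real.log (qr * gr / a) ≤ qr * gr := by
    have := Real.log_le_sub_one_of_pos (show 0 < qr * gr / a by positivity)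
    calc a * Real.log (qr * gr / a) ≤ a * (qr * gr / a - 1) := by
          exact mul_le_mul_of_nonneg_left this ha.le
      _ = qr * gr - a := by rw [mul_sub, mul_div_cancel₀ _ ha.ne']; ring
      _ ≤ qr * gr := by linarith
  have h1 : a * Real.log (a / (pr * qr)) ≤ a * |Real.log (a / (pr * qr))| :=
    mul_le_mul_of_nonneg_left (le_abs_self _) ha.le
  calc a * Real.log pr⁻¹
      = a * Real.log (a / (pr * qr)) + a * Real.log (qr * gr / a)
        + a * (Real.log 4 + (d:ℝ) * Real.log 2) := by rw [hid]; ring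
    _ ≤ a * |Real.log (a / (pr * qr))| + qr * gr + a * (Real.log 4 + (d:ℝ) * Real.log 2) := by
        gcongr
    _ = a * |Real.log (a / (pr * qr))| + qr * ((1/4) * (1/2)^d) + a * Real.log 4
        + a * ((d:ℝ) * Real.log 2) := by rw [hgr]; ring


lemma dd_cast (z : ℕ × ℕ) : ((dd z : ℕ) : ℝ) = |(z.1 : ℝ) - (z.2 : ℝ)| := by
  rcases le_total z.1 z.2 with h | h
  · have h' : (z.1 : ℝ) ≤ z.2 := Nat.cast_le.2 h
    have hd : dd z = z.2 - z.1 := by unfold dd; omega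
    rw [hd, abs_of_nonpos (by linarith), Nat.cast_sub h]; ring
  · have h' : (z.2 : ℝ) ≤ z.1 := Nat.cast_le.2 h
    have hd : dd z = z.1 - z.2 := by unfold dd; omega
    rw [hd, abs_of_nonneg (by linarith), Nat.cast_sub h]

lemma sum_fiber (y : ℕ) : ∑' x : ℕ, ENNReal.ofReal ((1/4 : ℝ) * (1/2)^(dd (x, y))) ≤ 1 := by
  have hsurj : Function.Surjective (fun p : ℕ × Bool =>
      if p.2 then y + p.1 else (if p.1 ≤ y then y - p.1 else y + p.1)) := by
    intro x
    rcases le_total y x with h | h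
    · exact ⟨(x - y, true), by simp; omega⟩
    · refine ⟨(y - x, false), ?_⟩
      simp only
      rw [if_neg (by simp)]
      rw [if_pos (by omega)]
      omega
  calc ∑' x : ℕ, ENNReal.ofReal ((1/4 : ℝ) * (1/2)^(dd (x, y)))
      ≤ ∑' p : ℕ × Bool, ENNReal.ofReal ((1/4 : ℝ) * (1/2)^(dd
          ((if p.2 then y + p.1 else (if p.1 ≤ y then y - p.1 else y + p.1)), y))) :=
        ENNReal.tsum_le_tsum_comp_of_surjective hsurj _
    _ ≤ ∑' p : ℕ × Bool, ENNReal.ofReal ((1/4 : ℝ) * (1/2)^(p.1)) := by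
        refine ENNReal.tsum_le_tsum fun p => ?_
        refine ENNReal.ofReal_le_ofReal ?_
        have : dd ((if p.2 then y + p.1 else (if p.1 ≤ y then y - p.1 else y + p.1)), y) = p.1 := by
          rcases p with ⟨j, b⟩
          cases b <;> simp only [dd, if_true, if_false, Bool.false_eq_true] <;> [skip; omega] <;> split_ifs <;> omega
        rw [this]
    _ = ∑' j : ℕ, ∑' b : Bool, ENNReal.ofReal ((1/4 : ℝ) * (1/2)^j) := ENNReal.tsum_prod'
    _ = ∑' j : ℕ, 2 * ENNReal.ofReal ((1/4 : ℝ) * (1/2)^j) := by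
        congr 1; ext j; rw [tsum_bool]; ring
    _ = 2 * ENNReal.ofReal (∑' j : ℕ, (1/4 : ℝ) * (1/2)^j) := by
        rw [ENNReal.tsum_mul_left, ENNReal.ofReal_tsum_of_nonneg (fun j => by positivity)
          (by exact (summable_geometric_two).mul_left _)]
    _ ≤ 1 := by
        rw [tsum_mul_left, tsum_geometric_two]
        rw [show (1/4 : ℝ) * 2 = 1/2 by norm_num]
        rw [show ENNReal.ofReal (1/2 : ℝ) = 1/2 by rw [ENNReal.ofReal_div_of_pos] <;> norm_num]
        norm_num

lemma fst_singleton (W : Measure (ℕ × ℕ)) (x : ℕ) : W.fst {x} = ∑' y : ℕ, W {(x, y)} := by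
  rw [Measure.fst_apply (measurableSet_singleton x)]
  have h : Prod.fst ⁻¹' ({x} : Set ℕ) = ⋃ y : ℕ, {(x, y)} := by
    ext ⟨a, b⟩; simp [eq_comm]
  rw [h, measure_iUnion ?_ fun y => measurableSet_singleton _]
  intro i j hij
  simp only [Function.onFun, Set.disjoint_singleton]
  exact fun hc => hij (by simpa using congrArg Prod.snd hc)

lemma tsum_univ_meas {α : Type*} [MeasurableSpace α] [Countable α] [MeasurableSingletonClass α]
    (μ : Measure α) : ∑' x : α, μ {x} = μ Set.univ := by
  rw [← Set.iUnion_of_singleton α, measure_iUnion ?_ fun z => measurableSet_singleton _]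
  intro i j hij; simpa [Function.onFun] using hij

lemma tsum_univ_meas' {α : Type*} [MeasurableSpace α] [Countable α] [MeasurableSingletonClass α]
    (μ : Measure α) : ∑' x : α, μ {x} = μ Set.univ := tsum_univ_meas μ

-- entropy as sum with log-inverse
lemma discEntropy_eq (P : Measure ℕ) [IsFiniteMeasure P] :
    discEntropy P = ∑' x : ℕ, P {x} * ENNReal.ofReal (Real.log ((P {x}).toReal)⁻¹) := by
  unfold discEntropy
  congr 1; ext x
  by_cases h0 : P {x} = 0
  · simp [h0, Real.negMulLog]
  · have hne : P {x} ≠ ⊤ := measure_ne_top _ _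
    have ht : 0 < (P {x}).toReal := ENNReal.toReal_pos h0 hne
    rw [show Real.negMulLog ((P {x}).toReal)
        = (P {x}).toReal * Real.log ((P {x}).toReal)⁻¹ by
      rw [Real.log_inv, Real.negMulLog]; ring]
    rw [ENNReal.ofReal_mul ht.le, ENNReal.ofReal_toReal hne]

lemma key (W : Measure (ℕ × ℕ)) [IsProbabilityMeasure W]
    (hdist : ∫⁻ p, ENNReal.ofReal |(p.1 : ℝ) - (p.2 : ℝ)| ∂W ≠ ⊤)
    (hent : discEntropy W.fst = ⊤) :
    relEnt W (W.fst.prod W.snd) = ⊤ := by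
  classical
  by_contra hcon
  unfold relEnt at hcon
  split_ifs at hcon with hc
  swap
  · exact hcon rfl
  obtain ⟨hAC, hInt⟩ := hc
  set P := W.fst with hP
  set Q := W.snd with hQ
  set ν := P.prod Q with hν
  -- density
  set f : ℕ × ℕ → ℝ≥0∞ := fun z => W {z} / ν {z} with hf
  have hsingν : ∀ z : ℕ × ℕ, ν {z} = P {z.1} * Q {z.2} := by
    intro z
    rw [show ({z} : Set (ℕ × ℕ)) = {z.1} ×ˢ {z.2} by
      rw [Set.singleton_prod_singleton]]
    exact Measure.prod_prod _ _
  have hwd : ν.withDensity f = W := by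
    refine Measure.ext_iff_singleton.2 fun z => ?_
    rw [withDensity_apply _ (measurableSet_singleton z), lintegral_singleton]
    by_cases hz : ν {z} = 0
    · rw [hz, mul_zero]
      exact (hAC hz).symm
    · exact ENNReal.div_mul_cancel hz (measure_ne_top _ _)
  have hrn : W.rnDeriv ν =ᵐ[ν] f := by
    rw [← hwd]
    exact Measure.rnDeriv_withDensity ν (measurable_of_countable f)
  have hllr : llr W ν =ᵐ[W] fun z => Real.log ((f z).toReal) :=
    hAC.ae_eq (hrn.mono fun z hz => by rw [llr_def]; simp only [hz])
  set L : ℕ → ℝ≥0∞ := fun x => ENNReal.ofReal (Real.log ((P {x}).toReal)⁻¹) with hL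
  set T1 : ℕ × ℕ → ℝ≥0∞ := fun z => W {z} * ENNReal.ofReal |Real.log ((f z).toReal)| with hT1
  set T2 : ℕ × ℕ → ℝ≥0∞ := fun z =>
    Q {z.2} * ENNReal.ofReal ((1/4 : ℝ) * (1/2)^(dd z)) with hT2
  set T3 : ℕ × ℕ → ℝ≥0∞ := fun z => W {z} * ENNReal.ofReal (Real.log 4) with hT3
  set T4 : ℕ × ℕ → ℝ≥0∞ := fun z =>
    W {z} * ENNReal.ofReal (((dd z : ℕ) : ℝ) * Real.log 2) with hT4
  have hbound : ∀ z : ℕ × ℕ, W {z} * L z.1 ≤ T1 z + T2 z + T3 z + T4 z := by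
    intro z
    by_cases hz0 : W {z} = 0
    · rw [hz0, zero_mul]; exact zero_le
    · have hWz : W {z} ≠ ⊤ := measure_ne_top _ _
      have ha : 0 < (W {z}).toReal := ENNReal.toReal_pos hz0 hWz
      have hWP : W {z} ≤ P {z.1} := by
        rw [hP, Measure.fst_apply (measurableSet_singleton _)]
        exact measure_mono (by intro w hw; simp only [mem_singleton_iff] at hw; simp [hw])
      have hWQ : W {z} ≤ Q {z.2} := by
        rw [hQ, Measure.snd_apply (measurableSet_singleton _)]
        exact measure_mono (by intro w hw; simp only [mem_singleton_iff] at hw; simp [hw])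
      have hap : (W {z}).toReal ≤ (P {z.1}).toReal :=
        ENNReal.toReal_mono (measure_ne_top _ _) hWP
      have haq : (W {z}).toReal ≤ (Q {z.2}).toReal :=
        ENNReal.toReal_mono (measure_ne_top _ _) hWQ
      have hp1 : (P {z.1}).toReal ≤ 1 := by
        calc (P {z.1}).toReal ≤ (1 : ℝ≥0∞).toReal :=
              ENNReal.toReal_mono (by simp) prob_le_one
          _ = 1 := by simp
      have hfz : (f z).toReal
          = (W {z}).toReal / ((P {z.1}).toReal * (Q {z.2}).toReal) := by
        rw [hf]; simp only
        rw [hsingν z, ENNReal.toReal_div, ENNReal.toReal_mul]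
      have hkey := real_key ha hap haq (dd z)
      calc W {z} * L z.1
          = ENNReal.ofReal ((W {z}).toReal * Real.log ((P {z.1}).toReal)⁻¹) := by
            rw [ENNReal.ofReal_mul ENNReal.toReal_nonneg, ENNReal.ofReal_toReal hWz]
        _ ≤ ENNReal.ofReal ((W {z}).toReal
              * |Real.log ((W {z}).toReal / ((P {z.1}).toReal * (Q {z.2}).toReal))|
            + (Q {z.2}).toReal * ((1/4 : ℝ) * (1/2)^(dd z))
            + (W {z}).toReal * Real.log 4
            + (W {z}).toReal * ((dd z : ℝ) * Real.log 2)) :=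
            ENNReal.ofReal_le_ofReal hkey
        _ ≤ ENNReal.ofReal ((W {z}).toReal
              * |Real.log ((W {z}).toReal / ((P {z.1}).toReal * (Q {z.2}).toReal))|)
            + ENNReal.ofReal ((Q {z.2}).toReal * ((1/4 : ℝ) * (1/2)^(dd z)))
            + ENNReal.ofReal ((W {z}).toReal * Real.log 4)
            + ENNReal.ofReal ((W {z}).toReal * ((dd z : ℝ) * Real.log 2)) := by
            refine le_trans ENNReal.ofReal_add_le (add_le_add ?_ le_rfl)
            refine le_trans ENNReal.ofReal_add_le (add_le_add ?_ le_rfl)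
            exact ENNReal.ofReal_add_le
        _ ≤ T1 z + T2 z + T3 z + T4 z := by
            refine add_le_add (add_le_add (add_le_add ?_ ?_) ?_) ?_
            · simp only [hT1, hfz]
              rw [ENNReal.ofReal_mul ENNReal.toReal_nonneg, ENNReal.ofReal_toReal hWz]
            · simp only [hT2]
              rw [ENNReal.ofReal_mul ENNReal.toReal_nonneg]
              exact mul_le_mul_left ENNReal.ofReal_toReal_le _
            · simp only [hT3]
              rw [ENNReal.ofReal_mul ENNReal.toReal_nonneg, ENNReal.ofReal_toReal hWz]
            · simp only [hT4]
              rw [ENNReal.ofReal_mul ENNReal.toReal_nonneg, ENNReal.ofReal_toReal hWz]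
  have hsum : discEntropy P ≤ (∑' z, T1 z) + (∑' z, T2 z) + (∑' z, T3 z) + (∑' z, T4 z) := by
    rw [discEntropy_eq P]
    have h1 : ∑' x : ℕ, P {x} * L x = ∑' z : ℕ × ℕ, W {z} * L z.1 := by
      rw [ENNReal.tsum_prod']
      congr 1; ext x
      rw [hP, fst_singleton W x, ← ENNReal.tsum_mul_right]
    rw [h1]
    calc ∑' z : ℕ × ℕ, W {z} * L z.1 ≤ ∑' z, (T1 z + T2 z + T3 z + T4 z) :=
          ENNReal.tsum_le_tsum hbound
      _ = (∑' z, T1 z) + (∑' z, T2 z) + (∑' z, T3 z) + (∑' z, T4 z) := by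
          rw [ENNReal.tsum_add, ENNReal.tsum_add, ENNReal.tsum_add]
  have h1top : (∑' z, T1 z) ≠ ⊤ := by
    have e1 : ∑' z, T1 z = ∫⁻ z, ENNReal.ofReal |Real.log ((f z).toReal)| ∂W := by
      rw [lintegral_countable']
      congr 1; ext z; rw [mul_comm]
    have e2 : ∫⁻ z, ENNReal.ofReal |Real.log ((f z).toReal)| ∂W
        = ∫⁻ z, ‖llr W ν z‖₊ ∂W := by
      refine lintegral_congr_ae ?_
      filter_upwards [hllr] with z hz
      rw [hz, ← enorm_eq_nnnorm, Real.enorm_eq_ofReal_abs]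
    rw [e1, e2]
    exact hInt.2.ne
  have h2top : (∑' z, T2 z) ≠ ⊤ := by
    have : (∑' z, T2 z) ≤ 1 := by
      calc ∑' z : ℕ × ℕ, T2 z = ∑' x : ℕ, ∑' y : ℕ, T2 (x, y) := ENNReal.tsum_prod'
        _ = ∑' y : ℕ, ∑' x : ℕ, T2 (x, y) := ENNReal.tsum_comm
        _ ≤ ∑' y : ℕ, Q {y} * 1 := by
            refine ENNReal.tsum_le_tsum fun y => ?_
            rw [hT2]
            simp only
            rw [ENNReal.tsum_mul_left]
            exact mul_le_mul_right (sum_fiber y) _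
        _ = Q Set.univ := by
            simp only [mul_one]
            exact tsum_univ_meas' Q
        _ = 1 := measure_univ
    exact ne_top_of_le_ne_top (by simp) this
  have h3top : (∑' z, T3 z) ≠ ⊤ := by
    rw [hT3, ENNReal.tsum_mul_right, tsum_univ_meas W, measure_univ, one_mul]
    simp
  have h4top : (∑' z, T4 z) ≠ ⊤ := by
    have e1 : ∑' z, T4 z
        = ∫⁻ z, ENNReal.ofReal (((dd z : ℕ) : ℝ) * Real.log 2) ∂W := by
      rw [lintegral_countable']
      congr 1; ext z; rw [mul_comm]
    have e2 : ∫⁻ z, ENNReal.ofReal (((dd z : ℕ) : ℝ) * Real.log 2) ∂W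
        = (∫⁻ z : ℕ × ℕ, ENNReal.ofReal |(z.1 : ℝ) - (z.2 : ℝ)| ∂W)
          * ENNReal.ofReal (Real.log 2) := by
      rw [← lintegral_mul_const' _ _ (by simp)]
      refine lintegral_congr fun z => ?_
      rw [dd_cast z, ENNReal.ofReal_mul (abs_nonneg _)]
    rw [e1, e2]
    exact ENNReal.mul_ne_top hdist (by simp)
  have hfin : (∑' z, T1 z) + (∑' z, T2 z) + (∑' z, T3 z) + (∑' z, T4 z) ≠ ⊤ :=
    ENNReal.add_ne_top.2 ⟨ENNReal.add_ne_top.2 ⟨ENNReal.add_ne_top.2 ⟨h1top, h2top⟩, h3top⟩, h4top⟩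
  exact hfin (top_le_iff.1 (hent ▸ hsum))


lemma toReal_le_one' {α : Type*} [MeasurableSpace α] (μ : Measure α) [IsProbabilityMeasure μ]
    (s : Set α) : (μ s).toReal ≤ 1 := by
  calc (μ s).toReal ≤ (1 : ℝ≥0∞).toReal := ENNReal.toReal_mono (by simp) prob_le_one
    _ = 1 := by simp

lemma discEntropy_mix (P P' : Measure ℕ) [IsProbabilityMeasure P] [IsProbabilityMeasure P']
    (hent : discEntropy P' = ⊤) {ε : ℝ} (hε0 : 0 < ε) (hε1 : ε < 1) :
    discEntropy (ENNReal.ofReal (1 - ε) • P + ENNReal.ofReal ε • P') = ⊤ := by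
  set Pe : Measure ℕ := ENNReal.ofReal (1 - ε) • P + ENNReal.ofReal ε • P' with hPe
  have hsing : ∀ x : ℕ, (Pe {x}).toReal
      = (1 - ε) * (P {x}).toReal + ε * (P' {x}).toReal := by
    intro x
    rw [hPe]
    simp only [Measure.coe_add, Measure.coe_smul, Pi.add_apply, Pi.smul_apply, smul_eq_mul]
    rw [ENNReal.toReal_add (by finiteness) (by finiteness), ENNReal.toReal_mul,
      ENNReal.toReal_mul, ENNReal.toReal_ofReal (by linarith), ENNReal.toReal_ofReal hε0.le]
  have hterm : ∀ x : ℕ, ENNReal.ofReal ε * ENNReal.ofReal (Real.negMulLog ((P' {x}).toReal))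
      ≤ ENNReal.ofReal (Real.negMulLog ((Pe {x}).toReal)) := by
    intro x
    rw [← ENNReal.ofReal_mul hε0.le]
    apply ENNReal.ofReal_le_ofReal
    have hcc := Real.concaveOn_negMulLog.2 (Set.mem_Ici.2 (ENNReal.toReal_nonneg
        (a := P {x}))) (Set.mem_Ici.2 (ENNReal.toReal_nonneg (a := P' {x})))
      (by linarith : (0:ℝ) ≤ 1 - ε) hε0.le (by ring)
    have hfa : 0 ≤ Real.negMulLog (P {x}).toReal :=
      Real.negMulLog_nonneg ENNReal.toReal_nonneg (toReal_le_one' P {x})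
    rw [hsing x]
    simp only [smul_eq_mul] at hcc
    have h0 : 0 ≤ (1 - ε) * Real.negMulLog (P {x}).toReal :=
      mul_nonneg (by linarith) hfa
    linarith
  have hle : ENNReal.ofReal ε * discEntropy P' ≤ discEntropy Pe := by
    unfold discEntropy
    rw [← ENNReal.tsum_mul_left]
    exact ENNReal.tsum_le_tsum hterm
  rw [hent, ENNReal.mul_top (by simpa using hε0)] at hle
  exact top_le_iff.1 hle

lemma tv_tendsto (P P' : Measure ℕ) [IsProbabilityMeasure P] [IsProbabilityMeasure P'] :
    Tendsto (fun ε : ℝ => ⨆ C : Set ℕ,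
      |(((ENNReal.ofReal (1 - ε) • P + ENNReal.ofReal ε • P') C).toReal - (P C).toReal)|)
      (𝓝[>] (0:ℝ)) (𝓝 0) := by
  have hb : ∀ ε ∈ Set.Ioo (0:ℝ) 1, ∀ C : Set ℕ,
      |(((ENNReal.ofReal (1 - ε) • P + ENNReal.ofReal ε • P') C).toReal - (P C).toReal)| ≤ ε := by
    rintro ε ⟨hε0, hε1⟩ C
    have ha : ((ENNReal.ofReal (1 - ε) • P + ENNReal.ofReal ε • P') C).toReal
        = (1 - ε) * (P C).toReal + ε * (P' C).toReal := by
      simp only [Measure.coe_add, Measure.coe_smul, Pi.add_apply, Pi.smul_apply, smul_eq_mul]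
      rw [ENNReal.toReal_add (by finiteness) (by finiteness), ENNReal.toReal_mul,
        ENNReal.toReal_mul, ENNReal.toReal_ofReal (by linarith), ENNReal.toReal_ofReal hε0.le]
    rw [ha]
    have h1 : (0:ℝ) ≤ (P C).toReal := ENNReal.toReal_nonneg
    have h2 : (P C).toReal ≤ 1 := toReal_le_one' P C
    have h3 : (0:ℝ) ≤ (P' C).toReal := ENNReal.toReal_nonneg
    have h4 : (P' C).toReal ≤ 1 := toReal_le_one' P' C
    rw [show (1 - ε) * (P C).toReal + ε * (P' C).toReal - (P C).toReal
        = ε * ((P' C).toReal - (P C).toReal) by ring, abs_mul, abs_of_pos hε0]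
    calc ε * |(P' C).toReal - (P C).toReal| ≤ ε * 1 := by
          refine mul_le_mul_of_nonneg_left ?_ hε0.le
          rw [abs_le]; constructor <;> linarith
      _ = ε := mul_one ε
  refine squeeze_zero' ?_ ?_ (tendsto_id.mono_left nhdsWithin_le_nhds)
  · filter_upwards [Ioo_mem_nhdsGT one_pos] with ε hε
    exact Real.iSup_nonneg fun C => abs_nonneg _
  · filter_upwards [Ioo_mem_nhdsGT one_pos] with ε hε
    exact Real.iSup_le (hb ε hε) hε.1.le

lemma Rnp_le_entropy (ρ : ℕ → ℕ → ℝ) (hdiag : ∀ x, ρ x x = 0) (P : Measure ℕ)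
    [IsProbabilityMeasure P] (hfin : discEntropy P ≠ ⊤) (D : ℝ) (hD : 0 ≤ D) :
    Rnp ρ P D ≤ discEntropy P := by
  classical
  have hmeas : Measurable (fun x : ℕ => (x, x)) := measurable_of_countable _
  set W : Measure (ℕ × ℕ) := P.map (fun x => (x, x)) with hW
  haveI : IsProbabilityMeasure W := Measure.isProbabilityMeasure_map hmeas.aemeasurable
  have hWs : ∀ z : ℕ × ℕ, W {z} = if z.1 = z.2 then P {z.1} else 0 := by
    intro z
    rw [hW, Measure.map_apply hmeas (measurableSet_singleton z)]
    by_cases h : z.1 = z.2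
    · rw [if_pos h]
      congr 1
      ext a
      simp only [mem_preimage, mem_singleton_iff, Prod.ext_iff]
      constructor
      · rintro ⟨h1, _⟩; exact h1.symm ▸ rfl
      · rintro rfl; exact ⟨rfl, h.symm ▸ rfl⟩
    · rw [if_neg h]
      convert measure_empty
      · ext a
        simp only [mem_preimage, mem_singleton_iff, Prod.ext_iff, mem_empty_iff_false,
          iff_false, not_and]
        rintro rfl hc
        exact h (hc ▸ rfl)
      · infer_instance
  have hfst : W.fst = P := by
    rw [hW, Measure.fst, Measure.map_map measurable_fst hmeas]
    exact Measure.map_id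
  have hsnd : W.snd = P := by
    rw [hW, Measure.snd, Measure.map_map measurable_snd hmeas]
    exact Measure.map_id
  have hmem : W ∈ Wset ρ P D := by
    refine ⟨inferInstance, hfst, ?_⟩
    rw [hW, lintegral_map (measurable_of_countable _) hmeas]
    simp [hdiag, ENNReal.ofReal_le_ofReal hD]
  -- relative entropy of the diagonal coupling equals the entropy
  set ν : Measure (ℕ × ℕ) := W.fst.prod W.snd with hν
  have hsingν : ∀ z : ℕ × ℕ, ν {z} = P {z.1} * P {z.2} := by
    intro z
    rw [hν, show ({z} : Set (ℕ × ℕ)) = {z.1} ×ˢ {z.2} by rw [Set.singleton_prod_singleton],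
      Measure.prod_prod, hfst, hsnd]
  set f : ℕ × ℕ → ℝ≥0∞ := fun z => if z.1 = z.2 then (P {z.1})⁻¹ else 0 with hf
  have hwd : ν.withDensity f = W := by
    refine Measure.ext_iff_singleton.2 fun z => ?_
    rw [withDensity_apply _ (measurableSet_singleton z), lintegral_singleton, hWs z, hsingν z]
    by_cases h : z.1 = z.2
    · rw [hf]; simp only [if_pos h]
      rw [← h]
      by_cases h0 : P {z.1} = 0
      · simp [h0]
      · rw [← mul_assoc, ENNReal.inv_mul_cancel h0 (measure_ne_top _ _), one_mul]
    · rw [hf]; simp [h]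
  have hAC : W ≪ ν := hwd ▸ withDensity_absolutelyContinuous ν f
  have hrn : W.rnDeriv ν =ᵐ[ν] f := by
    rw [← hwd]
    exact Measure.rnDeriv_withDensity ν (measurable_of_countable f)
  have hdiagae : ∀ᵐ z ∂W, z.1 = z.2 := by
    rw [ae_iff]
    rw [hW, Measure.map_apply hmeas (by exact MeasurableSet.of_discrete)]
    convert measure_empty
    · ext a; simp
    · infer_instance
  have hllr : llr W ν =ᵐ[W] fun z => Real.log (((P {z.1}).toReal)⁻¹) := by
    filter_upwards [hAC.ae_eq hrn, hdiagae] with z hz hdz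
    rw [llr_def]
    simp only [hz, hf, if_pos hdz, ENNReal.toReal_inv]
  have hPx : ∀ x : ℕ, P {x} = ∑' y : ℕ, W {(x, y)} := fun x => by
    rw [← hfst, fst_singleton]
  have hent_lint : ∫⁻ z, ENNReal.ofReal (Real.log (((P {z.1}).toReal)⁻¹)) ∂W
      = discEntropy P := by
    rw [lintegral_countable', discEntropy_eq P, ENNReal.tsum_prod']
    congr 1; ext x
    simp only []
    calc ∑' y : ℕ, ENNReal.ofReal (Real.log ((P {x}).toReal)⁻¹) * W {(x, y)}
        = (∑' y : ℕ, W {(x, y)}) * ENNReal.ofReal (Real.log ((P {x}).toReal)⁻¹) := by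
          rw [← ENNReal.tsum_mul_right]
          congr 1; ext y; rw [mul_comm]
      _ = P {x} * ENNReal.ofReal (Real.log ((P {x}).toReal)⁻¹) := by rw [← hPx x]
  have hnn : ∀ z : ℕ × ℕ, 0 ≤ Real.log (((P {z.1}).toReal)⁻¹) := by
    intro z
    rw [Real.log_inv]
    have := Real.log_nonpos ENNReal.toReal_nonneg (toReal_le_one' P {z.1})
    linarith
  have hInt : Integrable (llr W ν) W := by
    refine (integrable_congr hllr.symm).1 ?_
    constructor
    · exact (measurable_of_countable _).aestronglyMeasurable
    · rw [hasFiniteIntegral_iff_norm]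
      have : ∀ z : ℕ × ℕ, ENNReal.ofReal ‖Real.log (((P {z.1}).toReal)⁻¹)‖
          = ENNReal.ofReal (Real.log (((P {z.1}).toReal)⁻¹)) := by
        intro z; rw [Real.norm_eq_abs, abs_of_nonneg (hnn z)]
      simp_rw [this, hent_lint]
      exact hfin.lt_top
  have hval : relEnt W ν = discEntropy P := by
    unfold relEnt
    rw [if_pos ⟨hAC, hInt⟩]
    have hInt' : Integrable (fun z : ℕ × ℕ => Real.log (((P {z.1}).toReal)⁻¹)) W :=
      (integrable_congr hllr).1 hInt
    rw [integral_congr_ae hllr,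
      integral_eq_lintegral_of_nonneg_ae (Filter.Eventually.of_forall hnn)
        (measurable_of_countable _).aestronglyMeasurable, hent_lint,
      ENNReal.ofReal_toReal hfin]
  calc Rnp ρ P D ≤ relEnt W (W.fst.prod W.snd) := iInf₂_le W hmem
    _ = discEntropy P := by rw [← hν, hval]


lemma Rnp_eq_top_of (ρ : ℕ → ℕ → ℝ) (hge : ∀ x y : ℕ, |(x : ℝ) - (y : ℝ)| ≤ ρ x y)
    (P : Measure ℕ) (hent : discEntropy P = ⊤) (D : ℝ) : Rnp ρ P D = ⊤ := by
  unfold Rnp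
  simp only [iInf_eq_top]
  intro W hW
  obtain ⟨hprob, hfst, hDist⟩ := hW
  haveI := hprob
  refine key W ?_ (by rw [hfst]; exact hent)
  refine ne_top_of_le_ne_top (ne_top_of_le_ne_top ENNReal.ofReal_ne_top hDist) ?_
  exact lintegral_mono fun z => ENNReal.ofReal_le_ofReal (hge z.1 z.2)

/-- Csiszár's example: with `ρ(x,y) = P'(x)⁻¹·1{x≠y} + |x−y|` for a
distribution `P'` of infinite entropy charging every point: (i) every coupling `W` with
first marginal `P'` and finite expected distortion has `H(W‖W^A × W^Â) = ∞`, hence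
`R₁(P',D) = ∞` for all `D ≥ 0`; (ii) for any `P` of finite entropy, the mixtures
`P_ε = (1−ε)P + εP'` converge to `P` in total variation while `R₁(P_ε,D) = ∞` for all
`ε ∈ (0,1)` and `R₁(P,D) ≤ H(P) < ∞`, exhibiting the discontinuity of `R₁(·,D)`. -/
theorem csiszar_discontinuity_example
    (P' : Measure ℕ) [IsProbabilityMeasure P']
    (hpos : ∀ x : ℕ, P' {x} ≠ 0)
    (hent : discEntropy P' = ⊤)
    (ρ : ℕ → ℕ → ℝ)
    (hρ : ∀ x y : ℕ,
      ρ x y = (if x = y then 0 else ((P' {x}).toReal)⁻¹) + |(x : ℝ) - (y : ℝ)|) :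
    (∀ W : Measure (ℕ × ℕ), IsProbabilityMeasure W → W.fst = P' →
      (∫⁻ p, ENNReal.ofReal (ρ p.1 p.2) ∂W) ≠ ⊤ →
      relEnt W (W.fst.prod W.snd) = ⊤)
    ∧ (∀ D : ℝ, 0 ≤ D → Rnp ρ P' D = ⊤)
    ∧ (∀ P : Measure ℕ, IsProbabilityMeasure P → discEntropy P ≠ ⊤ → ∀ D : ℝ, 0 ≤ D →
        (∀ ε ∈ Set.Ioo (0:ℝ) 1,
          Rnp ρ (ENNReal.ofReal (1 - ε) • P + ENNReal.ofReal ε • P') D = ⊤)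
        ∧ Rnp ρ P D ≤ discEntropy P
        ∧ Tendsto
            (fun ε : ℝ => ⨆ C : Set ℕ,
              |(((ENNReal.ofReal (1 - ε) • P + ENNReal.ofReal ε • P') C).toReal
                - (P C).toReal)|)
            (𝓝[>] (0:ℝ)) (𝓝 0)) := by
  haveI hPprob' : IsProbabilityMeasure P' := inferInstance
  have hge : ∀ x y : ℕ, |(x : ℝ) - (y : ℝ)| ≤ ρ x y := by
    intro x y
    rw [hρ x y]
    have h0 : (0:ℝ) ≤ if x = y then 0 else ((P' {x}).toReal)⁻¹ := by
      split_ifs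
      · exact le_refl 0
      · exact inv_nonneg.2 ENNReal.toReal_nonneg
    linarith
  have hdiag : ∀ x : ℕ, ρ x x = 0 := by
    intro x; rw [hρ x x]; simp
  refine ⟨?_, ?_, ?_⟩
  · intro W hW hfst hne
    haveI := hW
    refine key W ?_ (by rw [hfst]; exact hent)
    exact ne_top_of_le_ne_top hne
      (lintegral_mono fun z => ENNReal.ofReal_le_ofReal (hge z.1 z.2))
  · intro D _
    exact Rnp_eq_top_of ρ hge P' hent D
  · intro P hP hPfin D hD
    haveI := hP
    refine ⟨?_, ?_, ?_⟩
    · intro ε hε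
      exact Rnp_eq_top_of ρ hge _ (discEntropy_mix P P' hent hε.1 hε.2) D
    · exact Rnp_le_entropy ρ hdiag P hPfin D hD
    · exact tv_tendsto P P'
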